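/- Let H be a finite-dimensional complex vector space and T : H → H a ℂ-linear map that is symmetric with respect to the real inner product Re⟨·,·⟩. Suppose v ∈ ker T with ‖v‖ = 1. Then both v and iv are orthogonal (with respect to Re⟨·,·⟩) to the image of T. Consequently, if f(v) = T(v) is viewed as a section over the unit sphere of H with values in the real orthogonal complement of iv, then f cannot be transverse to zero at v unless ker T = 0. -/

import Mathlib

/-- key linear-algebra step in Proposition 2.13: if `T` is ℂ-linear
and symmetric for `Re⟨·,·⟩` and `v` is a unit vector in `ker T`, then both `v` and
`iv` are `Re`-orthogonal to the image of `T`; consequently the section `u ↦ Tu`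
over the unit sphere with values in `(iv)ᗮ` cannot be transverse to zero at `v`:
not every `y` with `Re⟨y, iv⟩ = 0` lies in the image of `T`. -/
theorem kernel_obstructs_transversality {H : Type*} [NormedAddCommGroup H]
    [InnerProductSpace ℂ H] [FiniteDimensional ℂ H] (T : H →ₗ[ℂ] H)
    (hsym : ∀ v w : H, (inner ℂ (T v) w : ℂ).re = (inner ℂ v (T w) : ℂ).re)
    (v : H) (hv : T v = 0) (hnorm : ‖v‖ = 1) :
    (∀ w : H, (inner ℂ (T w) v : ℂ).re = 0 ∧ (inner ℂ (T w) (Complex.I • v) : ℂ).re = 0) ∧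
    ¬ (∀ y : H, (inner ℂ y (Complex.I • v) : ℂ).re = 0 → ∃ u : H, T u = y) := by
  have key : ∀ w : H, (inner ℂ (T w) v : ℂ).re = 0 ∧ (inner ℂ (T w) (Complex.I • v) : ℂ).re = 0 := by
    intro w
    have h1 : (inner ℂ (T w) v : ℂ).re = 0 := by
      rw [hsym w v, hv, inner_zero_right]
      simp
    have h2 : (inner ℂ (T (Complex.I • w)) v : ℂ).re = 0 := by
      rw [hsym (Complex.I • w) v, hv, inner_zero_right]
      simp
    refine ⟨h1, ?_⟩
    have e1 : (inner ℂ (T w) (Complex.I • v) : ℂ) = Complex.I * inner ℂ (T w) v := by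
      rw [inner_smul_right]
    have e2 : (inner ℂ (T (Complex.I • w)) v : ℂ) = -Complex.I * inner ℂ (T w) v := by
      rw [map_smul, inner_smul_left]
      simp [Complex.conj_I]
    rw [e2] at h2
    rw [e1]
    simp only [Complex.mul_re, Complex.I_re, Complex.I_im, Complex.neg_re, Complex.neg_im] at h2 ⊢
    linarith
  refine ⟨key, ?_⟩
  intro hsurj
  have hy : (inner ℂ v (Complex.I • v) : ℂ).re = 0 := by
    rw [inner_smul_right]
    simp [Complex.mul_re, inner_self_eq_norm_sq_to_K, ← Complex.ofReal_pow]
  obtain ⟨u, hu⟩ := hsurj v hy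
  have := (key u).1
  rw [hu] at this
  have : (inner ℂ v v : ℂ).re = ‖v‖ ^ 2 := by
    rw [inner_self_eq_norm_sq_to_K]
    simp [← Complex.ofReal_pow]
  rw [‹(inner ℂ v v : ℂ).re = 0›] at this
  rw [hnorm] at this
  norm_num at this
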